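/- arXiv:1308.4884 — 2 statements merged into one kernel-verified Lean document; each statement's English description precedes it below -/
import Mathlib

section
/- There exist constants C > 0 and l > 0, depending only on β, θ and μ (C being a Lipschitz constant of F₁⁻¹ on [0, F₁(1)] and l any constant with (G∘F₁⁻¹)' < -l on (0, F₁(1))), such that for all x₀¹, x₀² ∈ (0,1) and all t ∈ ℝ₊, |x_t(x₀¹) - x_t(x₀²)| ≤ C · |F₁(x₀¹) - F₁(x₀²)| · e^{-lt}, where x_t(x₀ⁱ) := F₁⁻¹(y_t(F₁(x₀ⁱ))). -/
/- Fix α ∈ (0,1], β ∈ (1-α,1), θ > 0, μ ∈ (0,1), γ ∈ ℝ.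
F₁(y) = ∫₀^y [v(1-v)]^{-β} dv is a strictly increasing bijection from [0,1]
onto [0,F₁(1)] with inverse F₁⁻¹ (realized via `Function.invFunOn`), which is
Lipschitz on [0,F₁(1)]; G(y) := θ(μ-y)[y(1-y)]^{-β}.
STATEMENT 15: There exist C > 0 and l > 0, depending only on β, θ, μ (C a
Lipschitz constant of F₁⁻¹), such that for every α-Hölder w with w₀ = 0, all
x₀¹, x₀² ∈ (0,1) and the corresponding continuous (0,F₁(1))-valued solutions
yⁱ of y_t = F₁(x₀ⁱ) + ∫₀^t (G∘F₁⁻¹)(y_s) ds + γθ^β w_t, setting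
x_t(x₀ⁱ) := F₁⁻¹(yⁱ_t), one has
|x_t(x₀¹) - x_t(x₀²)| ≤ C |F₁(x₀¹) - F₁(x₀²)| e^{-lt} for all t ∈ ℝ₊. -/

noncomputable def F1 (β y : ℝ) : ℝ := ∫ v in (0:ℝ)..y, (v * (1 - v)) ^ (-β)

noncomputable def F1inv (β z : ℝ) : ℝ := Function.invFunOn (F1 β) (Set.Icc 0 1) z

noncomputable def G (β θ μ x : ℝ) : ℝ := θ * (μ - x) * (x * (1 - x)) ^ (-β)

open MeasureTheory intervalIntegral Set Filter

lemma contOn_f1 (β : ℝ) : ContinuousOn (fun v : ℝ => (v*(1-v))^(-β)) (Ioo 0 1) := by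
  intro v hv
  have hpos : v * (1 - v) ≠ 0 :=
    ne_of_gt (by nlinarith [hv.1, hv.2])
  exact (((continuousAt_id).mul (continuousAt_const.sub continuousAt_id)).rpow_const
    (Or.inl hpos)).continuousWithinAt

lemma ii_f1 {β : ℝ} (hβ0 : 0 < β) (hβ1 : β < 1) :
    IntervalIntegrable (fun v : ℝ => (v*(1-v))^(-β)) volume 0 1 := by
  have h1 : IntervalIntegrable (fun v : ℝ => (2:ℝ)^β * v^(-β)) volume 0 1 :=
    (intervalIntegral.intervalIntegrable_rpow' (by linarith)).const_mul _
  have h2 : IntervalIntegrable (fun v : ℝ => (2:ℝ)^β * (1-v)^(-β)) volume 0 1 := by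
    have := (((intervalIntegral.intervalIntegrable_rpow' (r := -β) (by linarith)
      (a := 0) (b := 1)).comp_sub_left 1).const_mul ((2:ℝ)^β)).symm
    simpa using this
  have hg : IntervalIntegrable (fun v : ℝ => (2:ℝ)^β * v^(-β) + (2:ℝ)^β * (1-v)^(-β))
      volume 0 1 := h1.add h2
  rw [intervalIntegrable_iff] at hg ⊢
  have hmeas : AEStronglyMeasurable (fun v : ℝ => (v*(1-v))^(-β))
      (volume.restrict (Set.uIoc (0:ℝ) 1)) := by
    rw [uIoc_of_le (by norm_num : (0:ℝ) ≤ 1),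
      ← Measure.restrict_congr_set Ioo_ae_eq_Ioc]
    exact (contOn_f1 β).aestronglyMeasurable measurableSet_Ioo
  refine hg.integrable.mono hmeas ?_
  rw [uIoc_of_le (by norm_num : (0:ℝ) ≤ 1)]
  filter_upwards [ae_restrict_mem measurableSet_Ioc] with v hv
  obtain ⟨hv0, hv1⟩ := hv
  have hb : (0:ℝ) ≤ 2^β := Real.rpow_nonneg (by norm_num) _
  have hnn2 : (0:ℝ) ≤ 2^β * v^(-β) + 2^β * (1-v)^(-β) := by
    have := Real.rpow_nonneg hv0.le (-β)
    have h1v : (0:ℝ) ≤ 1 - v := by linarith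
    have := Real.rpow_nonneg h1v (-β)
    positivity
  rcases eq_or_lt_of_le hv1 with h1 | h1
  · subst h1
    have hz : ((1:ℝ)*(1-1))^(-β) = 0 := by
      norm_num
      exact Real.zero_rpow (by intro h; rw [neg_eq_zero] at h; linarith)
    rw [Real.norm_eq_abs, Real.norm_eq_abs, hz, abs_zero]
    exact abs_nonneg _
  · have hv1' : 0 < 1 - v := by linarith
    have hsplit : (v*(1-v))^(-β) = v^(-β) * (1-v)^(-β) :=
      Real.mul_rpow hv0.le hv1'.le
    have h12 : ((1:ℝ)/2)^(-β) = 2^β := by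
      rw [one_div, Real.inv_rpow (by norm_num), ← Real.rpow_neg (by norm_num), neg_neg]
    have hmain : (v*(1-v))^(-β) ≤ 2^β * v^(-β) + 2^β * (1-v)^(-β) := by
      rcases le_or_gt v (1/2) with hc | hc
      · have hle : (1-v)^(-β) ≤ (1/2 : ℝ)^(-β) :=
          Real.rpow_le_rpow_of_nonpos (by norm_num) (by linarith) (by linarith)
        have h3 : (v*(1-v))^(-β) ≤ v^(-β) * (2^β) := by
          rw [hsplit]
          exact mul_le_mul_of_nonneg_left (h12 ▸ hle) (Real.rpow_nonneg hv0.le _)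
        have hpos : (0:ℝ) ≤ 2^β * (1-v)^(-β) :=
          mul_nonneg hb (Real.rpow_nonneg hv1'.le _)
        nlinarith
      · have hle : v^(-β) ≤ (1/2 : ℝ)^(-β) :=
          Real.rpow_le_rpow_of_nonpos (by norm_num) (by linarith) (by linarith)
        have h3 : (v*(1-v))^(-β) ≤ 2^β * (1-v)^(-β) := by
          rw [hsplit]
          exact mul_le_mul_of_nonneg_right (h12 ▸ hle) (Real.rpow_nonneg hv1'.le _)
        have hpos : (0:ℝ) ≤ 2^β * v^(-β) :=
          mul_nonneg hb (Real.rpow_nonneg hv0.le _)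
        nlinarith
    have hnn : (0:ℝ) ≤ (v*(1-v))^(-β) := Real.rpow_nonneg (by nlinarith) _
    simpa [Real.norm_eq_abs, abs_of_nonneg hnn, abs_of_nonneg hnn2] using hmain

lemma ii_f1' {β : ℝ} (hβ0 : 0 < β) (hβ1 : β < 1) {a b : ℝ}
    (ha : a ∈ Icc (0:ℝ) 1) (hb : b ∈ Icc (0:ℝ) 1) :
    IntervalIntegrable (fun v : ℝ => (v*(1-v))^(-β)) volume a b := by
  refine (ii_f1 hβ0 hβ1).mono_set ?_
  rw [uIcc_of_le (by norm_num : (0:ℝ) ≤ 1)]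
  exact uIcc_subset_Icc ha hb

lemma contOn_F1 {β : ℝ} (hβ0 : 0 < β) (hβ1 : β < 1) :
    ContinuousOn (F1 β) (Icc 0 1) := by
  have := continuousOn_primitive_interval
    (f := fun v : ℝ => (v*(1-v))^(-β)) (a := 0) (b := 1) (μ := volume) ?_
  · rw [uIcc_of_le (by norm_num : (0:ℝ) ≤ 1)] at this
    exact this
  · have h := ii_f1 (β := β) hβ0 hβ1
    rw [intervalIntegrable_iff, uIoc_of_le (by norm_num : (0:ℝ) ≤ 1)] at h
    rw [uIcc_of_le (by norm_num : (0:ℝ) ≤ 1)]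
    exact h.congr_set_ae Ioc_ae_eq_Icc.symm

lemma F1_zero (β : ℝ) : F1 β 0 = 0 := integral_same

lemma one_le_f1 {β : ℝ} (hβ0 : 0 < β) {v : ℝ} (hv : v ∈ Ioo (0:ℝ) 1) :
    1 ≤ (v*(1-v))^(-β) := by
  have h1 : 0 < v * (1-v) := by have := hv.1; have := hv.2; nlinarith
  have h2 : v * (1-v) ≤ 1 := by nlinarith [hv.1, hv.2]
  exact Real.one_le_rpow_of_pos_of_le_one_of_nonpos h1 h2 (by linarith)

lemma F1_sub {β : ℝ} (hβ0 : 0 < β) (hβ1 : β < 1) {a b : ℝ}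
    (ha : a ∈ Icc (0:ℝ) 1) (hb : b ∈ Icc (0:ℝ) 1) :
    F1 β b - F1 β a = ∫ v in a..b, (v*(1-v))^(-β) := by
  unfold F1
  rw [intervalIntegral.integral_interval_sub_left (ii_f1' hβ0 hβ1 (by norm_num) hb)
    (ii_f1' hβ0 hβ1 (by norm_num) ha)]

lemma F1_expand {β : ℝ} (hβ0 : 0 < β) (hβ1 : β < 1) {a b : ℝ}
    (ha : a ∈ Ioo (0:ℝ) 1) (hb : b ∈ Ioo (0:ℝ) 1) (hab : a ≤ b) :
    b - a ≤ F1 β b - F1 β a := by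
  rw [F1_sub hβ0 hβ1 (Ioo_subset_Icc_self ha) (Ioo_subset_Icc_self hb)]
  have h1 : (∫ v in a..b, (1:ℝ)) ≤ ∫ v in a..b, (v*(1-v))^(-β) := by
    refine intervalIntegral.integral_mono_on hab intervalIntegrable_const
      (ii_f1' hβ0 hβ1 (Ioo_subset_Icc_self ha) (Ioo_subset_Icc_self hb)) ?_
    intro v hv
    exact one_le_f1 hβ0 ⟨lt_of_lt_of_le ha.1 hv.1, lt_of_le_of_lt hv.2 hb.2⟩
  simpa using h1

lemma F1inv_spec {β : ℝ} (hβ0 : 0 < β) (hβ1 : β < 1) {z : ℝ}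
    (hz : z ∈ Ioo 0 (F1 β 1)) : F1inv β z ∈ Ioo (0:ℝ) 1 ∧ F1 β (F1inv β z) = z := by
  have hsurj : ∃ x ∈ Icc (0:ℝ) 1, F1 β x = z := by
    have h := intermediate_value_Icc (by norm_num : (0:ℝ) ≤ 1) (contOn_F1 hβ0 hβ1)
    have hz' : z ∈ Icc (F1 β 0) (F1 β 1) := by
      rw [F1_zero]; exact ⟨hz.1.le, hz.2.le⟩
    obtain ⟨x, hx, hfx⟩ := h hz'
    exact ⟨x, hx, hfx⟩
  have hmem : F1inv β z ∈ Icc (0:ℝ) 1 := Function.invFunOn_mem hsurj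
  have heq : F1 β (F1inv β z) = z := Function.invFunOn_eq hsurj
  constructor
  · constructor
    · rcases eq_or_lt_of_le hmem.1 with h | h
      · exfalso; rw [← h, F1_zero] at heq; exact absurd heq (ne_of_lt hz.1)
      · exact h
    · rcases eq_or_lt_of_le hmem.2 with h | h
      · exfalso; rw [h] at heq; exact absurd heq (ne_of_gt hz.2)
      · exact h
  · exact heq

lemma F1inv_lip {β : ℝ} (hβ0 : 0 < β) (hβ1 : β < 1) {z1 z2 : ℝ}
    (h1 : z1 ∈ Ioo 0 (F1 β 1)) (h2 : z2 ∈ Ioo 0 (F1 β 1)) :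
    |F1inv β z1 - F1inv β z2| ≤ |z1 - z2| := by
  obtain ⟨hx1, he1⟩ := F1inv_spec hβ0 hβ1 h1
  obtain ⟨hx2, he2⟩ := F1inv_spec hβ0 hβ1 h2
  rcases le_total (F1inv β z2) (F1inv β z1) with h | h
  · have := F1_expand hβ0 hβ1 hx2 hx1 h
    rw [he1, he2] at this
    rw [abs_of_nonneg (by linarith), abs_of_nonneg (by linarith)]
    linarith
  · have := F1_expand hβ0 hβ1 hx1 hx2 h
    rw [he1, he2] at this
    rw [abs_of_nonpos (by linarith), abs_of_nonpos (by linarith)]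
    linarith

lemma F1inv_orderiso {β : ℝ} (hβ0 : 0 < β) (hβ1 : β < 1) {z1 z2 : ℝ}
    (h1 : z1 ∈ Ioo 0 (F1 β 1)) (h2 : z2 ∈ Ioo 0 (F1 β 1)) (h : z2 ≤ z1) :
    F1inv β z2 ≤ F1inv β z1 := by
  obtain ⟨hx1, he1⟩ := F1inv_spec hβ0 hβ1 h1
  obtain ⟨hx2, he2⟩ := F1inv_spec hβ0 hβ1 h2
  by_contra hc
  push_neg at hc
  have := F1_expand hβ0 hβ1 hx1 hx2 hc.le
  rw [he1, he2] at this
  linarith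

lemma hasDerivAt_F1 {β : ℝ} (hβ0 : 0 < β) (hβ1 : β < 1) {x : ℝ} (hx : x ∈ Ioo (0:ℝ) 1) :
    HasDerivAt (F1 β) ((x*(1-x))^(-β)) x := by
  refine intervalIntegral.integral_hasDerivAt_right
    (ii_f1' hβ0 hβ1 (by norm_num) (Ioo_subset_Icc_self hx)) ?_ ?_
  · exact (contOn_f1 β).stronglyMeasurableAtFilter isOpen_Ioo x hx
  · have hpos : x * (1 - x) ≠ 0 := ne_of_gt (by nlinarith [hx.1, hx.2])
    exact ((continuousAt_id).mul (continuousAt_const.sub continuousAt_id)).rpow_const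
      (Or.inl hpos)

lemma hasDerivAt_G {β θ μ : ℝ} {x : ℝ} (hx : x ∈ Ioo (0:ℝ) 1) :
    HasDerivAt (G β θ μ)
      (-θ * (x*(1-x))^(-β) + θ*(μ-x) * ((1-2*x) * (-β) * (x*(1-x))^(-β-1))) x := by
  have hpos : x * (1 - x) ≠ 0 := ne_of_gt (by nlinarith [hx.1, hx.2])
  have h1 : HasDerivAt (fun x : ℝ => θ * (μ - x)) (-θ) x := by
    simpa using ((hasDerivAt_id x).const_sub μ).const_mul θ
  have h2 : HasDerivAt (fun x : ℝ => (x*(1-x))^(-β)) ((1-2*x) * (-β) * (x*(1-x))^(-β-1)) x := by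
    have hin : HasDerivAt (fun x : ℝ => x*(1-x)) (1-2*x) x := by
      have h := (hasDerivAt_id x).mul ((hasDerivAt_id x).const_sub 1)
      convert h using 1
      · rfl
      · rfl
      · rfl
      show 1 - 2*x = 1*(1-x) + x*(-1)
      ring
    exact hin.rpow_const (p := -β) (Or.inl hpos)
  unfold G
  exact h1.mul h2

lemma Phi_antitone {β θ μ : ℝ} (hβ0 : 0 < β) (hβ1 : β < 1) (hθ : 0 < θ)
    (hμ : μ ∈ Ioo (0:ℝ) 1) :
    AntitoneOn (fun x => G β θ μ x + (θ*(1-β)) * F1 β x) (Ioo 0 1) := by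
  have hderiv : ∀ x ∈ Ioo (0:ℝ) 1, HasDerivAt (fun x => G β θ μ x + (θ*(1-β)) * F1 β x)
      (-θ * (x*(1-x))^(-β) + θ*(μ-x) * ((1-2*x) * (-β) * (x*(1-x))^(-β-1))
        + (θ*(1-β)) * (x*(1-x))^(-β)) x :=
    fun x hx => (hasDerivAt_G hx).add ((hasDerivAt_F1 hβ0 hβ1 hx).const_mul _)
  have hint : interior (Ioo (0:ℝ) 1) = Ioo 0 1 := isOpen_Ioo.interior_eq
  refine antitoneOn_of_deriv_nonpos (convex_Ioo 0 1) ?_ ?_ ?_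
  · exact fun x hx => ((hderiv x hx).continuousAt).continuousWithinAt
  · rw [hint]
    exact fun x hx => ((hderiv x hx).differentiableAt).differentiableWithinAt
  · rw [hint]
    intro x hx
    rw [(hderiv x hx).deriv]
    have hp : 0 < x * (1-x) := by nlinarith [hx.1, hx.2]
    have hA : 0 ≤ (x*(1-x))^(-β-1) := Real.rpow_nonneg hp.le _
    have hrw : (x*(1-x))^(-β) = (x*(1-x))^(-β-1) * (x*(1-x)) := by
      have h1 := Real.rpow_add_one hp.ne' (-β-1)
      norm_num at h1
      exact h1
    have hquad : 0 < x^2 - 2*μ*x + μ := by nlinarith [sq_nonneg (x - μ), hμ.1, hμ.2]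
    rw [hrw]
    have key : -θ * ((x*(1-x))^(-β-1) * (x*(1-x)))
        + θ*(μ-x) * ((1-2*x) * (-β) * (x*(1-x))^(-β-1))
        + (θ*(1-β)) * ((x*(1-x))^(-β-1) * (x*(1-x)))
        = -((θ*β) * (x*(1-x))^(-β-1) * (x^2 - 2*μ*x + μ)) := by ring
    rw [key, neg_nonpos]
    have := mul_nonneg (mul_nonneg (mul_pos hθ hβ0).le hA) hquad.le
    linarith

lemma slope_bound {β θ μ : ℝ} (hβ0 : 0 < β) (hβ1 : β < 1) (hθ : 0 < θ)
    (hμ : μ ∈ Ioo (0:ℝ) 1) {z1 z2 : ℝ}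
    (h1 : z1 ∈ Ioo 0 (F1 β 1)) (h2 : z2 ∈ Ioo 0 (F1 β 1)) :
    (z1 - z2) * (G β θ μ (F1inv β z1) - G β θ μ (F1inv β z2))
      ≤ -(θ*(1-β)) * (z1-z2)^2 := by
  have main : ∀ a b : ℝ, a ∈ Ioo 0 (F1 β 1) → b ∈ Ioo 0 (F1 β 1) → b ≤ a →
      (a - b) * (G β θ μ (F1inv β a) - G β θ μ (F1inv β b)) ≤ -(θ*(1-β)) * (a-b)^2 := by
    intro a b ha hb hba
    obtain ⟨hxa, hea⟩ := F1inv_spec hβ0 hβ1 ha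
    obtain ⟨hxb, heb⟩ := F1inv_spec hβ0 hβ1 hb
    have hord := F1inv_orderiso hβ0 hβ1 ha hb hba
    have hPhi := Phi_antitone hβ0 hβ1 hθ hμ hxb hxa hord
    simp only [hea, heb] at hPhi
    have hstep : G β θ μ (F1inv β a) - G β θ μ (F1inv β b) ≤ -(θ*(1-β)) * (a - b) := by
      linarith
    have := mul_le_mul_of_nonneg_left hstep (by linarith : (0:ℝ) ≤ a - b)
    nlinarith
  rcases le_total z2 z1 with h | h
  · exact main z1 z2 h1 h2 h
  · have := main z2 z1 h2 h1 h
    nlinarith [this]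

theorem stmt15 (α β θ μ γ : ℝ) (hα : α ∈ Set.Ioc (0:ℝ) 1)
    (hβ : β ∈ Set.Ioo (1 - α) 1) (hθ : 0 < θ) (hμ : μ ∈ Set.Ioo (0:ℝ) 1) :
    ∃ C : ℝ, 0 < C ∧ ∃ l : ℝ, 0 < l ∧
      ∀ w : ℝ → ℝ, w 0 = 0 →
        (∀ T > (0:ℝ), ∃ K : ℝ, ∀ s ∈ Set.Icc (0:ℝ) T, ∀ t ∈ Set.Icc (0:ℝ) T,
          |w t - w s| ≤ K * |t - s| ^ α) →
        ∀ x₀1 ∈ Set.Ioo (0:ℝ) 1, ∀ x₀2 ∈ Set.Ioo (0:ℝ) 1,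
        ∀ y1 y2 : ℝ → ℝ,
          (ContinuousOn y1 (Set.Ici 0) ∧
           (∀ t ∈ Set.Ici (0:ℝ), y1 t ∈ Set.Ioo 0 (F1 β 1)) ∧
           (∀ t ∈ Set.Ici (0:ℝ),
             y1 t = F1 β x₀1 + (∫ s in (0:ℝ)..t, G β θ μ (F1inv β (y1 s))) + γ * θ ^ β * w t)) →
          (ContinuousOn y2 (Set.Ici 0) ∧
           (∀ t ∈ Set.Ici (0:ℝ), y2 t ∈ Set.Ioo 0 (F1 β 1)) ∧
           (∀ t ∈ Set.Ici (0:ℝ),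
             y2 t = F1 β x₀2 + (∫ s in (0:ℝ)..t, G β θ μ (F1inv β (y2 s))) + γ * θ ^ β * w t)) →
          ∀ t ∈ Set.Ici (0:ℝ),
            |F1inv β (y1 t) - F1inv β (y2 t)| ≤
              C * |F1 β x₀1 - F1 β x₀2| * Real.exp (-l * t) := by
  have hβ0 : 0 < β := lt_of_le_of_lt (by linarith [hα.2]) hβ.1
  have hβ1 : β < 1 := hβ.2
  set l : ℝ := θ * (1 - β) with hldef
  have hl : 0 < l := by
    have h1β : 0 < 1 - β := by linarith
    positivity
  refine ⟨1, one_pos, l, hl, ?_⟩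
  intro w hw0 _ x₀1 hx01 x₀2 hx02 y1 y2 ⟨hc1, hm1, he1⟩ ⟨hc2, hm2, he2⟩ t ht
  -- continuity of the drift along solutions
  have hlip : LipschitzOnWith 1 (F1inv β) (Ioo 0 (F1 β 1)) := by
    rw [lipschitzOnWith_iff_dist_le_mul]
    intro z1 h1 z2 h2
    rw [Real.dist_eq, Real.dist_eq]
    simpa using F1inv_lip hβ0 hβ1 h1 h2
  have hGcont : ContinuousOn (G β θ μ) (Ioo 0 1) :=
    fun x hx => ((hasDerivAt_G (θ := θ) (μ := μ) hx).continuousAt).continuousWithinAt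
  have hhcont : ContinuousOn (fun z => G β θ μ (F1inv β z)) (Ioo 0 (F1 β 1)) :=
    hGcont.comp hlip.continuousOn (fun z hz => (F1inv_spec hβ0 hβ1 hz).1)
  have hg1cont : ContinuousOn (fun s => G β θ μ (F1inv β (y1 s))) (Ici 0) :=
    hhcont.comp hc1 (fun s hs => hm1 s hs)
  have hg2cont : ContinuousOn (fun s => G β θ μ (F1inv β (y2 s))) (Ici 0) :=
    hhcont.comp hc2 (fun s hs => hm2 s hs)
  set D : ℝ → ℝ := fun s => y1 s - y2 s with hDdef
  set Δ : ℝ := F1 β x₀1 - F1 β x₀2 with hΔdef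
  -- derivative of the primitives
  have hprim : ∀ (y : ℝ → ℝ), ContinuousOn (fun s => G β θ μ (F1inv β (y s))) (Ici 0) →
      ∀ τ : ℝ, 0 < τ →
      HasDerivAt (fun u => ∫ s in (0:ℝ)..u, G β θ μ (F1inv β (y s)))
        (G β θ μ (F1inv β (y τ))) τ := by
    intro y hgc τ hτ
    refine intervalIntegral.integral_hasDerivAt_right ?_ ?_ ?_
    · refine (hgc.mono ?_).intervalIntegrable
      rw [uIcc_of_le hτ.le]
      exact Icc_subset_Ici_self
    · exact (hgc.mono Ioi_subset_Ici_self).stronglyMeasurableAtFilter isOpen_Ioi τ hτ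
    · exact hgc.continuousAt (Ici_mem_nhds hτ)
  -- derivative of D
  have hD : ∀ τ : ℝ, 0 < τ → HasDerivAt D
      (G β θ μ (F1inv β (y1 τ)) - G β θ μ (F1inv β (y2 τ))) τ := by
    intro τ hτ
    have h1 := hprim y1 hg1cont τ hτ
    have h2 := hprim y2 hg2cont τ hτ
    have h3 := (h1.sub h2).const_add Δ
    refine h3.congr_of_eventuallyEq ?_
    filter_upwards [Ioi_mem_nhds hτ] with u hu
    have hu' : u ∈ Ici (0:ℝ) := mem_Ici.mpr (le_of_lt (mem_Ioi.mp hu))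
    simp only [hDdef, he1 u hu', he2 u hu', hΔdef, Pi.sub_apply]
    ring
  -- the Lyapunov function
  set V : ℝ → ℝ := fun u => (D u)^2 * Real.exp (2*l*u) with hVdef
  have hVderiv : ∀ τ : ℝ, 0 < τ → HasDerivAt V
      ((2 * D τ * (G β θ μ (F1inv β (y1 τ)) - G β θ μ (F1inv β (y2 τ)))
          + 2*l*(D τ)^2) * Real.exp (2*l*τ)) τ := by
    intro τ hτ
    have hexp : HasDerivAt (fun u : ℝ => Real.exp (2*l*u)) (Real.exp (2*l*τ) * (2*l)) τ := by
      have : HasDerivAt (fun u : ℝ => 2*l*u) (2*l) τ := by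
        simpa using (hasDerivAt_id τ).const_mul (2*l)
      exact this.exp
    have hsq : HasDerivAt (fun u => (D u)^2)
        (2 * D τ * (G β θ μ (F1inv β (y1 τ)) - G β θ μ (F1inv β (y2 τ)))) τ := by
      have := ((hD τ hτ).pow 2)
      norm_num at this
      convert this using 1
      all_goals rfl
    have := hsq.mul hexp
    convert this using 1
    · rfl
    · rfl
    · rfl
    ring
  have hVcont : ContinuousOn V (Ici 0) :=
    (((hc1.sub hc2).pow 2).mul ((Real.continuous_exp.comp
      (continuous_const.mul continuous_id)).continuousOn))
  have hVanti : AntitoneOn V (Ici 0) := by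
    refine antitoneOn_of_deriv_nonpos (convex_Ici 0) hVcont ?_ ?_
    · rw [interior_Ici]
      exact fun τ hτ => (hVderiv τ hτ).differentiableAt.differentiableWithinAt
    · rw [interior_Ici]
      intro τ hτ
      rw [(hVderiv τ hτ).deriv]
      have hslope := slope_bound hβ0 hβ1 hθ hμ (hm1 τ (mem_Ici.mpr (le_of_lt (mem_Ioi.mp hτ)))) (hm2 τ (mem_Ici.mpr (le_of_lt (mem_Ioi.mp hτ))))
      have hepos : 0 < Real.exp (2*l*τ) := Real.exp_pos _
      have hDτ : D τ = y1 τ - y2 τ := rfl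
      have key : 2 * D τ * (G β θ μ (F1inv β (y1 τ)) - G β θ μ (F1inv β (y2 τ)))
          + 2*l*(D τ)^2 ≤ 0 := by
        rw [hDτ]
        nlinarith [hslope]
      nlinarith
  -- initial value
  have hD0 : D 0 = Δ := by
    have e1 := he1 0 self_mem_Ici
    have e2 := he2 0 self_mem_Ici
    simp only [intervalIntegral.integral_same, hw0, mul_zero, add_zero] at e1 e2
    simp [hDdef, hΔdef, e1, e2]
  have hVt : V t ≤ V 0 := hVanti self_mem_Ici ht ht
  have hV0 : V 0 = Δ^2 := by simp [hVdef, hD0]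
  -- conclude
  have hsq2 : (D t * Real.exp (l*t))^2 ≤ Δ^2 := by
    have hexp2 : Real.exp (2*l*t) = Real.exp (l*t) * Real.exp (l*t) := by
      rw [← Real.exp_add]; ring_nf
    calc (D t * Real.exp (l*t))^2 = (D t)^2 * Real.exp (2*l*t) := by rw [hexp2]; ring
    _ ≤ Δ^2 := hV0 ▸ hVt
  have habs : |D t * Real.exp (l*t)| ≤ |Δ| := by
    have h' : (D t * Real.exp (l*t))^2 ≤ |Δ|^2 := by rw [sq_abs]; exact hsq2
    exact abs_le_of_sq_le_sq h' (abs_nonneg Δ)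
  have hDle : |D t| ≤ |Δ| * Real.exp (-l*t) := by
    have hpos : 0 < Real.exp (l*t) := Real.exp_pos _
    rw [abs_mul, abs_of_pos hpos] at habs
    have hneg : Real.exp (-l*t) = (Real.exp (l*t))⁻¹ := by
      rw [← Real.exp_neg]; ring_nf
    rw [hneg, ← div_eq_mul_inv, le_div_iff₀ hpos]
    exact habs
  have hfinal := F1inv_lip hβ0 hβ1 (hm1 t ht) (hm2 t ht)
  calc |F1inv β (y1 t) - F1inv β (y2 t)| ≤ |y1 t - y2 t| := hfinal
  _ = |D t| := rfl
  _ ≤ |Δ| * Real.exp (-l*t) := hDle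
  _ = 1 * |F1 β x₀1 - F1 β x₀2| * Real.exp (-l*t) := by rw [hΔdef]; ring
  _ = 1 * |F1 β x₀1 - F1 β x₀2| * Real.exp (-l * t) := by norm_num
end

section
/- For every ω ∈ Ω there exists Ŷ(ω) ∈ X such that: (i) for every x ∈ X, d(φ(t, θ_{-t}ω) x, Ŷ(ω)) → 0 as t → ∞ (in particular the limit does not depend on x); and (ii) φ(t, ω) Ŷ(ω) = Ŷ(θ_t ω) for every t ∈ ℝ₊, i.e. Ŷ is a random fixed point of the cocycle φ. -/
/- Let (X,d) be a nonempty complete metric space of finite diameter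
(d(x,y) ≤ M), Ω a set, θ = (θ_t)_{t∈ℝ} a flow on Ω (θ₀ = id,
θ_{s+t} = θ_s ∘ θ_t), and φ : ℝ₊ × Ω → (X → X) a cocycle over θ
(φ(0,ω) = id, φ(s+t,ω) = φ(t,θ_s ω) ∘ φ(s,ω)) satisfying the uniform
contraction property d(φ(t,ω)x, φ(t,ω)y) ≤ e^{-lt} d(x,y) with l > 0.
STATEMENT 19: For every ω ∈ Ω there exists Ŷ(ω) ∈ X such that
(i) for every x ∈ X, d(φ(t,θ_{-t}ω)x, Ŷ(ω)) → 0 as t → ∞ (the limit does not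
depend on x), and (ii) φ(t,ω)Ŷ(ω) = Ŷ(θ_t ω) for every t ∈ ℝ₊, i.e. Ŷ is a
random fixed point of the cocycle φ. -/

theorem stmt19 {X : Type*} [MetricSpace X] [CompleteSpace X] [Nonempty X]
    {Ω : Type*}
    (M : ℝ) (hM : ∀ x y : X, dist x y ≤ M)
    (θ : ℝ → Ω → Ω) (hθ0 : θ 0 = id)
    (hθ : ∀ s t : ℝ, θ (s + t) = θ s ∘ θ t)
    (φ : ℝ → Ω → X → X)
    (hφ0 : ∀ ω : Ω, φ 0 ω = id)
    (hcocycle : ∀ s t : ℝ, 0 ≤ s → 0 ≤ t → ∀ ω : Ω,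
      φ (s + t) ω = φ t (θ s ω) ∘ φ s ω)
    (l : ℝ) (hl : 0 < l)
    (hcontr : ∀ t : ℝ, 0 ≤ t → ∀ ω : Ω, ∀ x y : X,
      dist (φ t ω x) (φ t ω y) ≤ Real.exp (-l * t) * dist x y) :
    ∃ Yhat : Ω → X, ∀ ω : Ω,
      (∀ x : X,
        Filter.Tendsto (fun t : ℝ => dist (φ t (θ (-t) ω) x) (Yhat ω))
          Filter.atTop (nhds 0)) ∧
      (∀ t : ℝ, 0 ≤ t → φ t ω (Yhat ω) = Yhat (θ t ω)) := by
  classical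
  obtain ⟨x₀⟩ := ‹Nonempty X›
  have hM0 : 0 ≤ M := le_trans (by simp) (hM x₀ x₀)
  -- key estimate
  have key : ∀ (ω : Ω) (s t : ℝ), 0 ≤ s → s ≤ t → ∀ x y : X,
      dist (φ t (θ (-t) ω) x) (φ s (θ (-s) ω) y) ≤ Real.exp (-l * s) * M := by
    intro ω s t hs hst x y
    have hts : (t - s) + s = t := by ring
    have hθeq : θ (t - s) (θ (-t) ω) = θ (-s) ω := by
      have h2 := hθ (t - s) (-t)
      have h1 : (t - s) + (-t) = -s := by ring
      rw [h1] at h2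
      rw [h2]; rfl
    have hc := hcocycle (t - s) s (by linarith) hs (θ (-t) ω)
    rw [hts] at hc
    rw [hc]
    simp only [Function.comp_apply, hθeq]
    calc dist (φ s (θ (-s) ω) (φ (t - s) (θ (-t) ω) x)) (φ s (θ (-s) ω) y)
        ≤ Real.exp (-l * s) * dist (φ (t - s) (θ (-t) ω) x) y := hcontr s hs _ _ _
      _ ≤ Real.exp (-l * s) * M :=
          mul_le_mul_of_nonneg_left (hM _ _) (Real.exp_pos _).le
  -- decay of the bound
  have hdecay : Filter.Tendsto (fun t : ℝ => Real.exp (-l * t) * M)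
      Filter.atTop (nhds 0) := by
    have h1 : Filter.Tendsto (fun t : ℝ => -l * t) Filter.atTop Filter.atBot :=
      Filter.Tendsto.const_mul_atTop_of_neg (by linarith) Filter.tendsto_id
    simpa using ((Real.tendsto_exp_atBot.comp h1).mul_const M)
  -- the approximating sequence
  set u : Ω → ℕ → X := fun ω n => φ n (θ (-(n : ℝ)) ω) x₀ with hu
  have hcauchy : ∀ ω, CauchySeq (u ω) := by
    intro ω
    rw [Metric.cauchySeq_iff]
    intro ε hε
    obtain ⟨N, hN⟩ :=
      ((hdecay.comp tendsto_natCast_atTop_atTop).eventually_lt_const hε).exists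
    refine ⟨N, fun m hm n hn => ?_⟩
    have hb : ∀ a b : ℕ, N ≤ a → a ≤ b → dist (u ω b) (u ω a) < ε := by
      intro a b ha hab
      calc dist (u ω b) (u ω a)
          ≤ Real.exp (-l * a) * M :=
            key ω a b (by positivity) (by exact_mod_cast hab) x₀ x₀
        _ ≤ Real.exp (-l * N) * M := by
            apply mul_le_mul_of_nonneg_right _ hM0
            apply Real.exp_le_exp.mpr
            have : (N : ℝ) ≤ a := by exact_mod_cast ha
            nlinarith
        _ < ε := hN
    rcases le_total m n with h | h
    · rw [dist_comm]; exact hb m n hm h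
    · exact hb n m hn h
  have hlim := fun ω => cauchySeq_tendsto_of_complete (hcauchy ω)
  choose Yhat hY using hlim
  -- main distance bound
  have main : ∀ (ω : Ω) (t : ℝ), 0 ≤ t → ∀ x : X,
      dist (φ t (θ (-t) ω) x) (Yhat ω) ≤ Real.exp (-l * t) * M := by
    intro ω t ht x
    have htnd : Filter.Tendsto (fun n : ℕ => dist (φ t (θ (-t) ω) x) (u ω n))
        Filter.atTop (nhds (dist (φ t (θ (-t) ω) x) (Yhat ω))) :=
      Filter.Tendsto.dist tendsto_const_nhds (hY ω)
    refine le_of_tendsto htnd ?_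
    filter_upwards [Filter.eventually_ge_atTop ⌈t⌉₊] with n hn
    have htn : t ≤ (n : ℝ) := le_trans (Nat.le_ceil t) (by exact_mod_cast hn)
    rw [dist_comm]
    exact key ω t n ht htn x₀ x
  refine ⟨Yhat, fun ω => ⟨?_, ?_⟩⟩
  · -- (i)
    intro x
    apply squeeze_zero' (Filter.Eventually.of_forall fun t => dist_nonneg)
      _ hdecay
    filter_upwards [Filter.eventually_ge_atTop (0 : ℝ)] with t ht
    exact main ω t ht x
  · -- (ii)
    intro t ht
    -- seq n := φ (t+n) (θ (-(t+n)) (θ t ω)) x₀ tends to Yhat (θ t ω)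
    have h1 : Filter.Tendsto (fun n : ℕ => (t + (n : ℝ))) Filter.atTop Filter.atTop :=
      Filter.tendsto_atTop_add_const_left _ t tendsto_natCast_atTop_atTop
    have h2 : Filter.Tendsto
        (fun n : ℕ => dist (φ (t + n) (θ (-(t + n)) (θ t ω)) x₀) (Yhat (θ t ω)))
        Filter.atTop (nhds 0) := by
      have hi : Filter.Tendsto (fun s : ℝ => dist (φ s (θ (-s) (θ t ω)) x₀) (Yhat (θ t ω)))
          Filter.atTop (nhds 0) := by
        apply squeeze_zero' (Filter.Eventually.of_forall fun s => dist_nonneg) _ hdecay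
        filter_upwards [Filter.eventually_ge_atTop (0 : ℝ)] with s hs
        exact main (θ t ω) s hs x₀
      exact hi.comp h1
    have h2' : Filter.Tendsto (fun n : ℕ => φ (t + n) (θ (-(t + n)) (θ t ω)) x₀)
        Filter.atTop (nhds (Yhat (θ t ω))) :=
      tendsto_iff_dist_tendsto_zero.mpr h2
    -- rewrite seq n = φ t ω (u ω n)
    have heq : ∀ n : ℕ, φ (t + n) (θ (-(t + n)) (θ t ω)) x₀ = φ t ω (u ω n) := by
      intro n
      have hθ1 : θ (-(t + n)) (θ t ω) = θ (-(n : ℝ)) ω := by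
        have h3 := hθ (-(t + n)) t
        have h4 : (-(t + n)) + t = -(n : ℝ) := by ring
        rw [h4] at h3
        rw [h3]; rfl
      have hθ2 : θ (n : ℝ) (θ (-(n : ℝ)) ω) = ω := by
        have h3 := hθ (n : ℝ) (-(n : ℝ))
        have h4 : (n : ℝ) + (-(n : ℝ)) = 0 := by ring
        rw [h4, hθ0] at h3
        calc θ (n : ℝ) (θ (-(n : ℝ)) ω) = (θ (n:ℝ) ∘ θ (-(n:ℝ))) ω := rfl
          _ = id ω := by rw [← h3]
          _ = ω := rfl
      have hc := hcocycle (n : ℝ) t (by positivity) ht (θ (-(n : ℝ)) ω)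
      have h5 : (n : ℝ) + t = t + n := by ring
      rw [h5, hθ2] at hc
      rw [hθ1, hc]
      rfl
    rw [show (fun n : ℕ => φ (t + n) (θ (-(t + n)) (θ t ω)) x₀)
        = fun n : ℕ => φ t ω (u ω n) from funext heq] at h2'
    -- φ t ω (u ω n) → φ t ω (Yhat ω)
    have h3 : Filter.Tendsto (fun n : ℕ => φ t ω (u ω n)) Filter.atTop
        (nhds (φ t ω (Yhat ω))) := by
      apply tendsto_iff_dist_tendsto_zero.mpr
      apply squeeze_zero' (Filter.Eventually.of_forall fun n => dist_nonneg)
        (Filter.Eventually.of_forall fun n =>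
          hcontr t ht ω (u ω n) (Yhat ω))
      simpa using (tendsto_iff_dist_tendsto_zero.mp (hY ω)).const_mul (Real.exp (-l * t))
    exact tendsto_nhds_unique h3 h2'
end
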